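/- arXiv:1702.02489 — 2 statements merged into one kernel-verified Lean document; each statement's English description precedes it below -/
import Mathlib

section
/- The set of periodic points of G_{f₀} is dense in (𝒳, d): for every (Š,Ě) ∈ 𝒳 and every ε > 0 there exists a point (S̃,Ẽ) with G_{f₀}^p(S̃,Ẽ) = (S̃,Ẽ) for some p ≥ 1 and d((Š,Ě),(S̃,Ẽ)) < ε. -/
open scoped BigOperators

/-- Strategy distance: `(9/N) * Σ_k |S^k - Š^k| / 10^(k+1)`. -/
noncomputable def ds (N : ℕ) (S T : ℕ → Fin N) : ℝ :=
  (9 / N) * ∑' k : ℕ, |((S k : ℕ) : ℝ) - ((T k : ℕ) : ℝ)| / 10 ^ (k + 1)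

/-- Hamming distance between boolean configurations. -/
def de {N : ℕ} (E F : Fin N → Bool) : ℝ :=
  ∑ k : Fin N, if E k = F k then (0 : ℝ) else 1

/-- Distance on the phase space `𝒳 = ⟦1,N⟧^ℕ × 𝔹^N`. -/
noncomputable def dX {N : ℕ} (X Y : (ℕ → Fin N) × (Fin N → Bool)) : ℝ :=
  de X.2 Y.2 + ds N X.1 Y.1

/-- `F_f(k, E)`: equals `E` except at coordinate `k`, where it is `f(E)_k`. -/
def Ff {N : ℕ} (f : (Fin N → Bool) → (Fin N → Bool)) (k : Fin N)
    (E : Fin N → Bool) : Fin N → Bool :=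
  fun j => if j = k then f E k else E j

/-- `G_f(S, E) = (σ(S), F_f(S⁰, E))`. -/
def Gf {N : ℕ} (f : (Fin N → Bool) → (Fin N → Bool))
    (X : (ℕ → Fin N) × (Fin N → Bool)) : (ℕ → Fin N) × (Fin N → Bool) :=
  (fun n => X.1 (n + 1), Ff f (X.1 0) X.2)

/-- The vectorial boolean negation. -/
def f0 {N : ℕ} (E : Fin N → Bool) : Fin N → Bool := fun i => !(E i)

lemma Gf_iter {N : ℕ} (m : ℕ) (S : ℕ → Fin N) (E : Fin N → Bool) :
    (Gf f0)^[m] (S, E) =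
      (fun k => S (k + m),
       fun j => xor (E j)
         (decide (((Finset.range m).filter (fun i => S i = j)).card % 2 = 1))) := by
  induction m with
  | zero => simp
  | succ m ih =>
    rw [Function.iterate_succ_apply', ih]
    unfold Gf Ff f0
    refine Prod.ext ?_ ?_
    · funext k
      show S (k + 1 + m) = S (k + (m + 1))
      congr 1
      omega
    · funext j
      simp only [Finset.range_add_one, Finset.filter_insert]
      by_cases hj : S m = j
      · have h0 : (0 + m) = m := by omega
        simp only [h0, hj, if_pos rfl, Finset.card_insert_of_notMem (fun h => absurd (Finset.mem_range.mp (Finset.mem_filter.mp h).1) (lt_irrefl m))]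
        by_cases hc : ((Finset.range m).filter (fun i => S i = j)).card % 2 = 1
        · have : ¬ (((Finset.range m).filter (fun i => S i = j)).card + 1) % 2 = 1 := by omega
          simp [hc, this]
        · have : (((Finset.range m).filter (fun i => S i = j)).card + 1) % 2 = 1 := by omega
          simp [hc, this]
      · have h0 : (0 + m) = m := by omega
        have hj' : ¬ j = S m := fun h => hj h.symm
        simp [h0, hj, hj']

theorem periodic_points_dense (N : ℕ) (hN : 1 ≤ N) :
    ∀ X : (ℕ → Fin N) × (Fin N → Bool), ∀ ε > (0 : ℝ),
      ∃ (Y : (ℕ → Fin N) × (Fin N → Bool)) (p : ℕ),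
        1 ≤ p ∧ (Gf f0)^[p] Y = Y ∧ dX X Y < ε := by
  rintro ⟨S, E⟩ ε hε
  -- choose n ≥ 1 with (1/10)^n < ε
  obtain ⟨n0, hn0⟩ := exists_pow_lt_of_lt_one hε (by norm_num : (1/10 : ℝ) < 1)
  set n := max n0 1 with hn_def
  have hn1 : 1 ≤ n := le_max_right _ _
  have hnpos : 0 < n := hn1
  have hεn : (1/10 : ℝ) ^ n < ε :=
    lt_of_le_of_lt (pow_le_pow_of_le_one (by norm_num) (by norm_num) (le_max_left _ _)) hn0
  set T : ℕ → Fin N := fun k => S (k % n) with hT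
  refine ⟨(T, E), 2 * n, by omega, ?_, ?_⟩
  · -- periodicity
    rw [Gf_iter]
    refine Prod.ext ?_ ?_
    · funext k
      simp only [hT]
      rw [show k + 2*n = k + n + n by omega, Nat.add_mod_right, Nat.add_mod_right]
    · funext j
      simp only []
      have hcard : ((Finset.range (2*n)).filter (fun i => T i = j)).card % 2 = 0 := by
        rw [Finset.card_filter]
        have h2n : 2 * n = n + n := by omega
        rw [h2n, Finset.sum_range_add]
        have heq : ∀ i ∈ Finset.range n,
            (if T (n + i) = j then (1:ℕ) else 0) = (if T i = j then 1 else 0) := by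
          intro i hi
          simp only [Finset.mem_range] at hi
          have : (n + i) % n = i % n := Nat.add_mod_left n i
          simp [hT, this]
        rw [Finset.sum_congr rfl heq]
        omega
      have : ¬ ((Finset.range (2*n)).filter (fun i => T i = j)).card % 2 = 1 := by omega
      simp [this]
  · -- distance bound
    have hde : de E E = 0 := by simp [de]
    have hNpos : (0:ℝ) < N := by exact_mod_cast hN
    -- termwise bound
    have hterm : ∀ k : ℕ, |((S k : ℕ) : ℝ) - ((T k : ℕ) : ℝ)| / 10 ^ (k + 1)
        ≤ (if k < n then 0 else (N:ℝ) * (1/10) ^ (k+1)) := by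
      intro k
      by_cases hk : k < n
      · have : T k = S k := by simp [hT, Nat.mod_eq_of_lt hk]
        simp [this, hk]
      · have h1 : |((S k : ℕ) : ℝ) - ((T k : ℕ) : ℝ)| ≤ (N:ℝ) := by
          have hS : ((S k : ℕ) : ℝ) ≤ (N:ℝ) := by
            have := (S k).isLt; exact_mod_cast this.le
          have hT' : ((T k : ℕ) : ℝ) ≤ (N:ℝ) := by
            have := (T k).isLt; exact_mod_cast this.le
          have hS0 : (0:ℝ) ≤ ((S k : ℕ) : ℝ) := by positivity
          have hT0 : (0:ℝ) ≤ ((T k : ℕ) : ℝ) := by positivity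
          rw [abs_sub_le_iff]; constructor <;> linarith
        simp only [if_neg hk]
        rw [div_le_iff₀ (by positivity)]
        calc |((S k : ℕ) : ℝ) - ((T k : ℕ) : ℝ)| ≤ (N:ℝ) := h1
          _ = (N:ℝ) * (1/10)^(k+1) * 10^(k+1) := by
              rw [mul_assoc]
              rw [div_pow, one_pow, div_mul_cancel₀]
              · ring
              · positivity
    have hgN : Summable (fun k : ℕ => (N:ℝ) * (1/10)^(k+1)) := by
      have hgeo := (summable_geometric_of_lt_one (by norm_num : (0:ℝ) ≤ 1/10)
        (by norm_num : (1/10:ℝ) < 1)).mul_left ((N:ℝ) * (1/10))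
      exact hgeo.congr (fun k => by ring)
    have hsum_g : Summable (fun k : ℕ => (if k < n then (0:ℝ) else (N:ℝ) * (1/10) ^ (k+1))) := by
      refine Summable.of_nonneg_of_le (fun k => ?_) (fun k => ?_) hgN
      · by_cases hk : k < n
        · simp [hk]
        · simp only [if_neg hk]; positivity
      · by_cases hk : k < n
        · simp only [if_pos hk]; positivity
        · simp [hk]
    have hsum_f : Summable (fun k : ℕ => |((S k : ℕ) : ℝ) - ((T k : ℕ) : ℝ)| / 10 ^ (k + 1)) := by
      apply Summable.of_nonneg_of_le (fun k => by positivity) hterm hsum_g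
    have htsum_le : (∑' k : ℕ, |((S k : ℕ) : ℝ) - ((T k : ℕ) : ℝ)| / 10 ^ (k + 1))
        ≤ ∑' k : ℕ, (if k < n then (0:ℝ) else (N:ℝ) * (1/10) ^ (k+1)) :=
      Summable.tsum_le_tsum hterm hsum_f hsum_g
    -- compute the bounding tsum
    have hval : (∑' k : ℕ, (if k < n then (0:ℝ) else (N:ℝ) * (1/10) ^ (k+1)))
        = (N:ℝ) / 9 * (1/10)^n := by
      rw [← Summable.sum_add_tsum_nat_add n hsum_g]
      have h1 : ∑ k ∈ Finset.range n, (if k < n then (0:ℝ) else (N:ℝ) * (1/10) ^ (k+1)) = 0 := by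
        apply Finset.sum_eq_zero
        intro k hk
        simp [Finset.mem_range.mp hk]
      have h2 : (∑' k : ℕ, (if k + n < n then (0:ℝ) else (N:ℝ) * (1/10) ^ (k+n+1)))
          = (N:ℝ) * (1/10)^(n+1) * (1 - 1/10)⁻¹ := by
        have : ∀ k : ℕ, (if k + n < n then (0:ℝ) else (N:ℝ) * (1/10) ^ (k+n+1))
            = ((N:ℝ) * (1/10)^(n+1)) * (1/10)^k := by
          intro k
          have : ¬ k + n < n := by omega
          rw [if_neg this]
          ring
        rw [tsum_congr this, tsum_mul_left, tsum_geometric_of_lt_one (by norm_num) (by norm_num)]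
      rw [h1, h2]
      rw [show ((1:ℝ) - 1/10)⁻¹ = 10/9 by norm_num]
      ring
    have hds : ds N S T ≤ (1/10)^n := by
      unfold ds
      calc (9 / (N:ℝ)) * ∑' k : ℕ, |((S k : ℕ) : ℝ) - ((T k : ℕ) : ℝ)| / 10 ^ (k + 1)
          ≤ (9 / (N:ℝ)) * ((N:ℝ) / 9 * (1/10)^n) := by
            apply mul_le_mul_of_nonneg_left (le_of_le_of_eq htsum_le hval) (by positivity)
        _ = (1/10)^n := by field_simp
    show dX (S, E) (T, E) < ε
    unfold dX
    simp only [hde]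
    calc (0:ℝ) + ds N S T ≤ (1/10)^n := by simpa using hds
      _ < ε := hεn
end

section
/- G_{f₀} is topologically transitive on (𝒳, d): for any two nonempty open sets U, V ⊆ 𝒳 there exists n ≥ 1 with G_{f₀}^n(U) ∩ V ≠ ∅. -/
open scoped BigOperators

/-- `U` is open for the metric `dX`. -/
def IsOpenD {N : ℕ} (U : Set ((ℕ → Fin N) × (Fin N → Bool))) : Prop :=
  ∀ x ∈ U, ∃ ε > (0 : ℝ), ∀ y, dX x y < ε → y ∈ U

def steer {N : ℕ} : (ℕ → Fin N) → ℕ → (Fin N → Bool) → (Fin N → Bool)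
  | _, 0, E => E
  | S, n+1, E => steer (fun k => S (k+1)) n (Ff f0 (S 0) E)

lemma iter_Gf {N : ℕ} (n : ℕ) : ∀ (S : ℕ → Fin N) (E : Fin N → Bool),
    (Gf f0)^[n] (S, E) = (fun k => S (k + n), steer S n E) := by
  induction n with
  | zero => intro S E; simp [steer]
  | succ n ih =>
    intro S E
    rw [Function.iterate_succ_apply]
    show (Gf f0)^[n] (fun k => S (k+1), Ff f0 (S 0) E) = _
    rw [ih]
    refine Prod.ext ?_ rfl
    funext k
    exact congrArg S (by omega)

lemma steer_congr {N : ℕ} : ∀ (n : ℕ) (S S' : ℕ → Fin N) (E : Fin N → Bool),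
    (∀ k < n, S k = S' k) → steer S n E = steer S' n E := by
  intro n
  induction n with
  | zero => intro S S' E _; rfl
  | succ n ih =>
    intro S S' E h
    show steer (fun k => S (k+1)) n (Ff f0 (S 0) E)
       = steer (fun k => S' (k+1)) n (Ff f0 (S' 0) E)
    rw [h 0 (by omega)]
    exact ih _ _ _ (fun k hk => h (k+1) (by omega))

def steerList {N : ℕ} (L : List (Fin N)) (E : Fin N → Bool) : Fin N → Bool :=
  L.foldl (fun E k => Ff f0 k E) E

lemma steer_eq_steerList {N : ℕ} : ∀ (L : List (Fin N)) (S : ℕ → Fin N) (E : Fin N → Bool),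
    (∀ (k : ℕ) (h : k < L.length), S k = L.get ⟨k, h⟩) →
    steer S L.length E = steerList L E := by
  intro L
  induction L with
  | nil => intro S E _; rfl
  | cons a L ih =>
    intro S E h
    show steer (fun k => S (k+1)) L.length (Ff f0 (S 0) E) = steerList L (Ff f0 a E)
    rw [h 0 (by simp)]
    exact ih _ _ (fun k hk => h (k+1) (by simpa using Nat.succ_lt_succ hk))

lemma steerList_nodup {N : ℕ} : ∀ (L : List (Fin N)), L.Nodup →
    ∀ (E : Fin N → Bool) (j : Fin N),
    steerList L E j = if j ∈ L then !(E j) else E j := by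
  intro L
  induction L with
  | nil => intro _ E j; simp [steerList]
  | cons a L ih =>
    intro hnd E j
    have hnd' := List.nodup_cons.mp hnd
    show steerList L (Ff f0 a E) j = _
    rw [ih hnd'.2]
    by_cases hja : j = a
    · subst hja
      simp [hnd'.1, Ff, f0]
    · simp [List.mem_cons, hja, Ff]

lemma term_le (N : ℕ) (S T : ℕ → Fin N) (k : ℕ) :
    |((S k : ℕ) : ℝ) - ((T k : ℕ) : ℝ)| / 10 ^ (k + 1) ≤ (N : ℝ) * (1/10)^(k+1) := by
  have h1 : ((S k : ℕ) : ℝ) < N := by exact_mod_cast (S k).isLt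
  have h2 : ((T k : ℕ) : ℝ) < N := by exact_mod_cast (T k).isLt
  have h3 : (0:ℝ) ≤ ((S k : ℕ) : ℝ) := Nat.cast_nonneg _
  have h4 : (0:ℝ) ≤ ((T k : ℕ) : ℝ) := Nat.cast_nonneg _
  have habs : |((S k : ℕ) : ℝ) - ((T k : ℕ) : ℝ)| ≤ N := by
    rw [abs_sub_le_iff]; constructor <;> nlinarith
  have : (N : ℝ) * (1/10)^(k+1) = (N:ℝ) / 10^(k+1) := by
    rw [div_pow]; ring
  rw [this]
  gcongr

lemma summable_aux (N : ℕ) (S T : ℕ → Fin N) :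
    Summable (fun k => |((S k : ℕ) : ℝ) - ((T k : ℕ) : ℝ)| / 10 ^ (k + 1)) := by
  have hg : Summable (fun k : ℕ => ((N:ℝ) * (1/10)) * (1/10)^k) :=
    (summable_geometric_of_lt_one (by norm_num) (by norm_num)).mul_left _
  have hg' : Summable (fun k : ℕ => (N:ℝ) * (1/10)^(k+1)) :=
    hg.congr (fun k => by rw [pow_succ]; ring)
  exact Summable.of_nonneg_of_le (fun k => by positivity) (term_le N S T) hg'

lemma ds_prefix_le (N : ℕ) (hN : 1 ≤ N) (S T : ℕ → Fin N) (k₀ : ℕ)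
    (h : ∀ k < k₀, S k = T k) : ds N S T ≤ (1/10 : ℝ) ^ k₀ := by
  have hNpos : (0:ℝ) < N := by exact_mod_cast hN
  have hsum := summable_aux N S T
  set a : ℕ → ℝ := fun k => |((S k : ℕ) : ℝ) - ((T k : ℕ) : ℝ)| / 10 ^ (k + 1) with ha
  have hb : Summable (fun i : ℕ => (N:ℝ) * (1/10:ℝ)^(i + k₀ + 1)) := by
    have hg : Summable (fun i : ℕ => ((N:ℝ) * (1/10)^(k₀+1)) * (1/10)^i) :=
      (summable_geometric_of_lt_one (by norm_num) (by norm_num)).mul_left _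
    exact hg.congr (fun i => by rw [show i + k₀ + 1 = (k₀+1) + i by omega, pow_add]; ring)
  have key : ∑' k, a k ≤ (N:ℝ) * (1/10)^(k₀+1) * (10/9) := by
    rw [← Summable.sum_add_tsum_nat_add k₀ hsum]
    have h0 : ∑ i ∈ Finset.range k₀, a i = 0 := Finset.sum_eq_zero (fun i hi => by
      simp [ha, h i (Finset.mem_range.mp hi)])
    rw [h0, zero_add]
    calc ∑' i, a (i + k₀) ≤ ∑' i, (N:ℝ) * (1/10:ℝ)^(i + k₀ + 1) := by
          refine Summable.tsum_le_tsum (fun i => term_le N S T (i + k₀)) ?_ hb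
          exact (summable_nat_add_iff k₀).mpr hsum
      _ = (N:ℝ) * (1/10)^(k₀+1) * (10/9) := by
          have : ∀ i : ℕ, (N:ℝ) * (1/10:ℝ)^(i + k₀ + 1)
              = ((N:ℝ) * (1/10)^(k₀+1)) * (1/10)^i := by
            intro i; rw [show i + k₀ + 1 = (k₀+1) + i by omega, pow_add]; ring
          simp_rw [this]
          rw [tsum_mul_left, tsum_geometric_of_lt_one (by norm_num) (by norm_num)]
          norm_num
  have hfin : (9/(N:ℝ)) * ((N:ℝ) * (1/10:ℝ)^(k₀+1) * (10/9)) = (1/10:ℝ)^k₀ := by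
    rw [pow_succ]; field_simp
  calc ds N S T = (9/(N:ℝ)) * ∑' k, a k := rfl
    _ ≤ (9/(N:ℝ)) * ((N:ℝ) * (1/10)^(k₀+1) * (10/9)) := by
        apply mul_le_mul_of_nonneg_left key (by positivity)
    _ = (1/10:ℝ)^k₀ := hfin

lemma de_self {N : ℕ} (E : Fin N → Bool) : de E E = 0 := by simp [de]

theorem Gf0_transitive (N : ℕ) (hN : 1 ≤ N)
    (U V : Set ((ℕ → Fin N) × (Fin N → Bool)))
    (hU : IsOpenD U) (hV : IsOpenD V) (hUne : U.Nonempty) (hVne : V.Nonempty) :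
    ∃ n : ℕ, 1 ≤ n ∧ ((Gf f0)^[n] '' U ∩ V).Nonempty := by
  obtain ⟨⟨S, E⟩, hx⟩ := hUne
  obtain ⟨⟨T, F⟩, hy⟩ := hVne
  obtain ⟨ε, hε, hball⟩ := hU _ hx
  obtain ⟨k₁, hk₁⟩ := exists_pow_lt_of_lt_one hε (by norm_num : (1/10:ℝ) < 1)
  set k₀ := k₁ + 1 with hk₀def
  have hk₀ : ((1:ℝ)/10)^k₀ < ε := by
    refine lt_of_le_of_lt ?_ hk₁
    exact pow_le_pow_of_le_one (by norm_num) (by norm_num) (Nat.le_succ _)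
  set E₁ := steer S k₀ E with hE₁
  set D := Finset.univ.filter (fun j : Fin N => E₁ j ≠ F j) with hD
  set L := D.toList with hL
  set m := L.length with hm
  set Z : ℕ → Fin N := fun k =>
    if h : k < k₀ then S k
    else if h2 : k - k₀ < m then L.get ⟨k - k₀, h2⟩
    else T (k - k₀ - m) with hZ
  have hZS : ∀ k < k₀, Z k = S k := fun k hk => dif_pos hk
  refine ⟨k₀ + m, by omega, (T, F), ⟨⟨(Z, E), ?_, ?_⟩, hy⟩⟩
  · -- (Z, E) ∈ U
    apply hball
    have hds : ds N S Z ≤ (1/10:ℝ)^k₀ :=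
      ds_prefix_le N hN S Z k₀ (fun k hk => (hZS k hk).symm)
    calc dX (S, E) (Z, E) = de E E + ds N S Z := rfl
      _ = ds N S Z := by rw [de_self, zero_add]
      _ ≤ (1/10:ℝ)^k₀ := hds
      _ < ε := hk₀
  · -- iterate lands on (T, F)
    rw [add_comm, Function.iterate_add_apply, iter_Gf k₀ Z E]
    have hst : steer Z k₀ E = E₁ := by
      rw [steer_congr k₀ Z S E hZS, hE₁]
    rw [hst, iter_Gf m]
    have hfst : (fun k => Z (k + m + k₀)) = T := by
      funext k
      simp only [hZ]
      rw [dif_neg (by omega), dif_neg (by omega)]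
      congr 1
      omega
    have hsnd : steer (fun k => Z (k + k₀)) m E₁ = F := by
      have heq : steer (fun k => Z (k + k₀)) m E₁ = steerList L E₁ := by
        refine steer_eq_steerList L _ E₁ ?_
        intro k hk
        simp only [hZ]
        rw [dif_neg (by omega), dif_pos (by omega)]
        · exact congrArg L.get (Fin.ext (by simp))
      rw [heq]
      funext j
      rw [steerList_nodup L (Finset.nodup_toList D) E₁ j]
      by_cases hj : E₁ j = F j
      · rw [if_neg]
        · exact hj
        · rw [hL, Finset.mem_toList, hD]
          simp [hj]
      · rw [if_pos]
        · revert hj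
          cases E₁ j <;> cases F j <;> simp
        · rw [hL, Finset.mem_toList, hD]
          simp [hj]
    exact Prod.ext hfst hsnd
end
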